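/- Let g : ℝ → ℝ admit an entire complex extension with g(0) = d_0, let n ≥ 2 and 2 ≤ s ≤ n be integers, a > 0, and set f(x) = x^{n-s} g(x). Then the limit as ω → 0⁺ of ω^{s-1} ∫_0^a f(x)/(ω + x)^n dx exists and equals d_0 Σ_{k=0}^{n-s} (-1)^{n-s-k} (n-s)!/(k! (n-1-k) (n-s-k)!); that is, when f has a zero of order n−s at the origin, ∫_0^a f(x)/(ω + x)^n dx ~ d_0 ω^{-(s-1)} Σ_{k=0}^{n-s} (-1)^{n-s-k} (n-s)!/(k! (n-1-k) (n-s-k)!) as ω → 0⁺. -/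

import Mathlib

open Filter MeasureTheory Set


lemma aux_integral (m n : ℕ) (hmn : m + 2 ≤ n) (a ω : ℝ) (ha : 0 < a) (hω : 0 < ω) :
    ∫ x in (0:ℝ)..a, x ^ m / (ω + x) ^ n =
      ∑ k ∈ Finset.range (m + 1),
        (m.choose k : ℝ) * (-ω) ^ (m - k) *
          ((ω + a) ^ ((k : ℤ) - n + 1) - ω ^ ((k : ℤ) - n + 1)) / ((k : ℝ) - n + 1) := by
  have key : ∀ x ∈ Set.uIcc (0:ℝ) a,
      HasDerivAt (fun y : ℝ => ∑ k ∈ Finset.range (m + 1),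
          (m.choose k : ℝ) * (-ω) ^ (m - k) * (ω + y) ^ ((k : ℤ) - n + 1) / ((k : ℝ) - n + 1))
        (x ^ m / (ω + x) ^ n) x := by
    intro x hx
    rw [Set.uIcc_of_le ha.le] at hx
    have hωx : (0:ℝ) < ω + x := by linarith [hx.1]
    have hsum : HasDerivAt (fun y : ℝ => ∑ k ∈ Finset.range (m + 1),
          (m.choose k : ℝ) * (-ω) ^ (m - k) * (ω + y) ^ ((k : ℤ) - n + 1) / ((k : ℝ) - n + 1))
        (∑ k ∈ Finset.range (m + 1),
          (m.choose k : ℝ) * (-ω) ^ (m - k) * (ω + x) ^ ((k : ℤ) - n)) x := by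
      apply HasDerivAt.fun_sum
      intro k hk
      simp only [Finset.mem_range] at hk
      have hne : (k : ℝ) - n + 1 ≠ 0 := by
        have : (k : ℝ) + 2 ≤ n := by exact_mod_cast (by omega : k + 2 ≤ n)
        linarith
      have hz : HasDerivAt (fun y : ℝ => (ω + y) ^ ((k : ℤ) - n + 1))
          ((((k : ℤ) - n + 1 : ℤ) : ℝ) * (ω + x) ^ ((k : ℤ) - n + 1 - 1) * 1) x :=
        (hasDerivAt_zpow ((k : ℤ) - n + 1) (ω + x) (Or.inl hωx.ne')).comp x
          ((hasDerivAt_id x).const_add ω)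
      have h2 := (hz.const_mul ((m.choose k : ℝ) * (-ω) ^ (m - k))).div_const ((k : ℝ) - n + 1)
      refine h2.congr_deriv ?_
      have he : ((k : ℤ) - n + 1 - 1) = (k : ℤ) - n := by ring
      rw [he]
      push_cast
      field_simp
    convert hsum using 1
    have hbin : x ^ m = ∑ k ∈ Finset.range (m + 1),
        (ω + x) ^ k * (-ω) ^ (m - k) * (m.choose k : ℝ) := by
      rw [← add_pow]
      ring_nf
    rw [hbin, Finset.sum_div]
    refine Finset.sum_congr rfl fun k hk => ?_
    have hpow : (ω + x) ^ k / (ω + x) ^ n = (ω + x) ^ ((k : ℤ) - n) := by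
      rw [← zpow_natCast (ω + x) k, ← zpow_natCast (ω + x) n, ← zpow_sub₀ hωx.ne']
    rw [show (ω + x) ^ k * (-ω) ^ (m - k) * (m.choose k : ℝ) / (ω + x) ^ n
        = (m.choose k : ℝ) * (-ω) ^ (m - k) * ((ω + x) ^ k / (ω + x) ^ n) by ring, hpow]
  have hcont : IntervalIntegrable (fun x : ℝ => x ^ m / (ω + x) ^ n) volume 0 a := by
    apply ContinuousOn.intervalIntegrable
    apply ContinuousOn.div (by fun_prop) (by fun_prop)
    intro x hx
    rw [Set.uIcc_of_le ha.le] at hx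
    have : (0:ℝ) < ω + x := by linarith [hx.1]
    positivity
  rw [intervalIntegral.integral_eq_sub_of_hasDerivAt key hcont, ← Finset.sum_sub_distrib]
  refine Finset.sum_congr rfl fun k hk => ?_
  rw [add_zero]
  ring


lemma aux_bound (g : ℝ → ℝ) (G : ℂ → ℂ)
    (hG : Differentiable ℂ G) (hGg : ∀ x : ℝ, G x = g x) (a : ℝ) (ha : 0 < a) :
    ∃ M : ℝ, 0 ≤ M ∧ ∀ x ∈ Icc (0:ℝ) a, |g x - g 0| ≤ M * x := by
  have hderiv : ∀ t : ℝ, HasDerivAt (fun y : ℝ => G y) (deriv G t) t :=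
    fun t => (hG _).hasDerivAt.comp_ofReal
  have hdc : Continuous fun t : ℝ => deriv G (t : ℂ) := by
    have h1 : Continuous (deriv G) := by
      have h2 : AnalyticOnNhd ℂ (deriv G) Set.univ :=
        AnalyticOnNhd.deriv (fun z _ => hG.analyticAt z)
      exact continuous_iff_continuousAt.2 fun z => (h2 z (mem_univ z)).continuousAt
    exact h1.comp Complex.continuous_ofReal
  obtain ⟨C, hC⟩ := (isCompact_Icc : IsCompact (Icc (0:ℝ) a)).exists_bound_of_continuousOn
    (hdc.continuousOn)
  refine ⟨max C 0, le_max_right _ _, fun x hx => ?_⟩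
  have key : ‖(fun y : ℝ => G y) x - (fun y : ℝ => G y) 0‖ ≤ max C 0 * ‖x - 0‖ := by
    apply (convex_Icc (0:ℝ) a).norm_image_sub_le_of_norm_hasDerivWithin_le
      (fun t ht => (hderiv t).hasDerivWithinAt)
      (fun t ht => le_trans (hC t ht) (le_max_left _ _)) (by exact ⟨le_refl 0, ha.le⟩) hx
  simp only [sub_zero] at key
  have h1 : g x - g 0 = (G x - G 0).re := by
    have h0 : G 0 = ((g 0 : ℝ) : ℂ) := by simpa using hGg 0
    rw [hGg x, h0]; simp
  rw [h1]
  calc |(G x - G 0).re| ≤ ‖G x - G 0‖ := Complex.abs_re_le_norm _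
    _ ≤ max C 0 * ‖(x:ℝ)‖ := key
    _ = max C 0 * x := by rw [Real.norm_eq_abs, abs_of_nonneg hx.1]

theorem stmt_15 (g : ℝ → ℝ) (G : ℂ → ℂ)
    (hG : Differentiable ℂ G) (hGg : ∀ x : ℝ, G x = g x)
    (d₀ : ℝ) (hd₀ : g 0 = d₀)
    (n s : ℕ) (hn : 2 ≤ n) (hs : 2 ≤ s) (hsn : s ≤ n) (a : ℝ) (ha : 0 < a) :
    Tendsto
      (fun ω : ℝ =>
        ω ^ (s - 1) * ∫ x in (0 : ℝ)..a, x ^ (n - s) * g x / (ω + x) ^ n)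
      (nhdsWithin 0 (Set.Ioo 0 a))
      (nhds (d₀ * ∑ k ∈ Finset.range (n - s + 1),
        (-1 : ℝ) ^ (n - s - k) * (Nat.factorial (n - s) : ℝ) /
          ((Nat.factorial k : ℝ) * ((n - 1 - k : ℕ) : ℝ) *
            (Nat.factorial (n - s - k) : ℝ)))) := by
  set l := nhdsWithin (0:ℝ) (Set.Ioo 0 a) with hl
  set m := n - s with hm
  have hm2 : m + 2 ≤ n := by omega
  have hgc : Continuous g := by
    have hgr : g = fun x : ℝ => (G x).re := by
      ext x; rw [hGg x]; simp
    rw [hgr]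
    exact Complex.continuous_re.comp (hG.continuous.comp Complex.continuous_ofReal)
  obtain ⟨M, hM0, hMb⟩ := aux_bound g G hG hGg a ha
  rw [hd₀] at hMb
  set E : ℝ → ℝ := fun ω => d₀ * ∑ k ∈ Finset.range (m + 1),
      (m.choose k : ℝ) * (-1:ℝ) ^ (m - k) *
        (ω ^ (n - 1 - k) * (ω + a) ^ ((k : ℤ) - n + 1) - 1) / ((k : ℝ) - n + 1) with hE
  set B : ℝ → ℝ := fun ω =>
      ω ^ (s - 1) * ∫ x in (0:ℝ)..a, x ^ m * (g x - d₀) / (ω + x) ^ n with hB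
  -- eventual equality
  have hev : ∀ᶠ ω in l, ω ^ (s - 1) * (∫ x in (0:ℝ)..a, x ^ m * g x / (ω + x) ^ n)
      = E ω + B ω := by
    filter_upwards [self_mem_nhdsWithin] with ω hω
    have hω0 : (0:ℝ) < ω := hω.1
    have hpos : ∀ x ∈ Set.uIcc (0:ℝ) a, (0:ℝ) < ω + x := by
      intro x hx; rw [Set.uIcc_of_le ha.le] at hx; linarith [hx.1]
    have i0 : IntervalIntegrable (fun x : ℝ => x ^ m / (ω + x) ^ n) volume 0 a := by
      apply ContinuousOn.intervalIntegrable
      exact ContinuousOn.div (by fun_prop) (by fun_prop)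
        (fun x hx => by have := hpos x hx; positivity)
    have i2 : IntervalIntegrable (fun x : ℝ => x ^ m * (g x - d₀) / (ω + x) ^ n)
        volume 0 a := by
      apply ContinuousOn.intervalIntegrable
      exact ContinuousOn.div (by fun_prop) (by fun_prop)
        (fun x hx => by have := hpos x hx; positivity)
    have hsplit : (∫ x in (0:ℝ)..a, x ^ m * g x / (ω + x) ^ n)
        = d₀ * (∫ x in (0:ℝ)..a, x ^ m / (ω + x) ^ n)
          + ∫ x in (0:ℝ)..a, x ^ m * (g x - d₀) / (ω + x) ^ n := by
      rw [← intervalIntegral.integral_const_mul,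
        ← intervalIntegral.integral_add (i0.const_mul d₀) i2]
      apply intervalIntegral.integral_congr
      intro x _
      simp only
      ring
    have hA : ω ^ (s - 1) * (∫ x in (0:ℝ)..a, x ^ m / (ω + x) ^ n)
        = ∑ k ∈ Finset.range (m + 1), (m.choose k : ℝ) * (-1:ℝ) ^ (m - k) *
            (ω ^ (n - 1 - k) * (ω + a) ^ ((k : ℤ) - n + 1) - 1) / ((k : ℝ) - n + 1) := by
      rw [aux_integral m n hm2 a ω ha hω0, Finset.mul_sum]
      refine Finset.sum_congr rfl fun k hk => ?_
      simp only [Finset.mem_range] at hk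
      have e1 : (-ω) ^ (m - k) = (-1:ℝ) ^ (m - k) * ω ^ (m - k) := by rw [neg_pow]
      have e2 : ω ^ (s - 1) * ω ^ (m - k) = ω ^ (n - 1 - k) := by
        rw [← pow_add]; congr 1; omega
      have e3 : ω ^ (n - 1 - k) * ω ^ ((k : ℤ) - n + 1) = 1 := by
        rw [← zpow_natCast ω (n - 1 - k), ← zpow_add₀ hω0.ne']
        have hz : ((n - 1 - k : ℕ) : ℤ) + ((k : ℤ) - n + 1) = 0 := by omega
        rw [hz, zpow_zero]
      linear_combination
        ((m.choose k : ℝ) * ω ^ (s-1) * ((ω + a) ^ ((k : ℤ) - n + 1)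
            - ω ^ ((k : ℤ) - n + 1)) / ((k : ℝ) - n + 1)) * e1
        + ((m.choose k : ℝ) * (-1:ℝ) ^ (m - k) * ((ω + a) ^ ((k : ℤ) - n + 1)
            - ω ^ ((k : ℤ) - n + 1)) / ((k : ℝ) - n + 1)) * e2
        - ((m.choose k : ℝ) * (-1:ℝ) ^ (m - k) / ((k : ℝ) - n + 1)) * e3
    rw [hsplit]
    simp only [hE, hB]
    linear_combination d₀ * hA
  -- limit of E
  have hEt : Tendsto E l (nhds (d₀ * ∑ k ∈ Finset.range (m + 1),
      (-1 : ℝ) ^ (m - k) * (Nat.factorial m : ℝ) /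
        ((Nat.factorial k : ℝ) * ((n - 1 - k : ℕ) : ℝ) * (Nat.factorial (m - k) : ℝ)))) := by
    have hterm : ∀ k ∈ Finset.range (m + 1),
        Tendsto (fun ω : ℝ => (m.choose k : ℝ) * (-1:ℝ) ^ (m - k) *
            (ω ^ (n - 1 - k) * (ω + a) ^ ((k : ℤ) - n + 1) - 1) / ((k : ℝ) - n + 1)) l
          (nhds ((m.choose k : ℝ) * (-1:ℝ) ^ (m - k) *
            ((0:ℝ) ^ (n - 1 - k) * ((0:ℝ) + a) ^ ((k : ℤ) - n + 1) - 1) / ((k : ℝ) - n + 1))) := by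
      intro k hk
      have hca : ContinuousAt (fun ω : ℝ => (m.choose k : ℝ) * (-1:ℝ) ^ (m - k) *
          (ω ^ (n - 1 - k) * (ω + a) ^ ((k : ℤ) - n + 1) - 1) / ((k : ℝ) - n + 1)) 0 := by
        apply ContinuousAt.div_const
        apply ContinuousAt.mul continuousAt_const
        apply ContinuousAt.sub _ continuousAt_const
        apply ContinuousAt.mul (continuousAt_pow _ _)
        exact (continuousAt_id.add continuousAt_const).zpow₀ _ (Or.inl (by simpa using ha.ne'))
      exact hca.tendsto.mono_left nhdsWithin_le_nhds
    have htend := (tendsto_finset_sum _ hterm).const_mul d₀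
    have hsum_eq : (∑ k ∈ Finset.range (m + 1),
        (-1 : ℝ) ^ (m - k) * (Nat.factorial m : ℝ) /
          ((Nat.factorial k : ℝ) * ((n - 1 - k : ℕ) : ℝ) * (Nat.factorial (m - k) : ℝ)))
        = ∑ k ∈ Finset.range (m + 1), (m.choose k : ℝ) * (-1:ℝ) ^ (m - k) *
            ((0:ℝ) ^ (n - 1 - k) * ((0:ℝ) + a) ^ ((k : ℤ) - n + 1) - 1) / ((k : ℝ) - n + 1) := by
      refine Finset.sum_congr rfl fun k hk => ?_
      symm
      simp only [Finset.mem_range] at hk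
      have hk1 : k ≤ m := by omega
      have hzp : (0:ℝ) ^ (n - 1 - k) = 0 := zero_pow (by omega)
      rw [hzp, zero_mul, zero_sub, Nat.cast_choose ℝ hk1]
      have hc1 : ((n - 1 - k : ℕ) : ℝ) = (n : ℝ) - 1 - k := by
        push_cast [Nat.cast_sub (by omega : k ≤ n - 1), Nat.cast_sub (by omega : 1 ≤ n)]
        ring
      rw [hc1]
      have h1 : (k : ℝ) - n + 1 ≠ 0 := by
        have : (k : ℝ) + 2 ≤ n := by exact_mod_cast (by omega : k + 2 ≤ n)
        linarith
      have h2 : (n : ℝ) - 1 - k ≠ 0 := by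
        have : (k : ℝ) + 2 ≤ n := by exact_mod_cast (by omega : k + 2 ≤ n)
        linarith
      have h3 : (Nat.factorial k : ℝ) ≠ 0 := Nat.cast_ne_zero.2 (Nat.factorial_ne_zero k)
      have h4 : (Nat.factorial (m - k) : ℝ) ≠ 0 := Nat.cast_ne_zero.2 (Nat.factorial_ne_zero _)
      field_simp
      ring
    rw [hsum_eq]
    exact htend
  -- limit of B
  have hBt : Tendsto B l (nhds 0) := by
    have heq : ∀ᶠ ω in l, B ω
        = ∫ x in Ioc (0:ℝ) a, ω ^ (s - 1) * (x ^ m * (g x - d₀) / (ω + x) ^ n) := by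
      filter_upwards [self_mem_nhdsWithin] with ω hω
      rw [hB]
      simp only
      rw [intervalIntegral.integral_of_le ha.le, ← MeasureTheory.integral_const_mul]
    have hmain : Tendsto (fun ω : ℝ =>
        ∫ x in Ioc (0:ℝ) a, ω ^ (s - 1) * (x ^ m * (g x - d₀) / (ω + x) ^ n)) l (nhds 0) := by
      have key := tendsto_integral_filter_of_dominated_convergence
        (μ := volume.restrict (Ioc (0:ℝ) a)) (l := l)
        (F := fun ω x => ω ^ (s - 1) * (x ^ m * (g x - d₀) / (ω + x) ^ n))
        (f := fun _ => (0:ℝ)) (fun _ => M) ?_ ?_ ?_ ?_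
      · simpa using key
      · -- measurability
        filter_upwards [self_mem_nhdsWithin] with ω hω
        apply ContinuousOn.aestronglyMeasurable _ measurableSet_Ioc
        apply ContinuousOn.mul continuousOn_const
        apply ContinuousOn.div (by fun_prop) (by fun_prop)
        intro x hx
        have : (0:ℝ) < ω + x := by have := hω.1; have := hx.1; linarith
        positivity
      · -- bound
        filter_upwards [self_mem_nhdsWithin] with ω hω
        rw [ae_restrict_iff' measurableSet_Ioc]
        refine ae_of_all _ fun x hx => ?_
        have hω0 : (0:ℝ) < ω := hω.1
        have hx0 : (0:ℝ) < x := hx.1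
        have hωx : (0:ℝ) < ω + x := by linarith
        have hgb : |g x - d₀| ≤ M * x := hMb x ⟨hx0.le, hx.2⟩
        rw [Real.norm_eq_abs, abs_mul, abs_div, abs_mul, abs_pow, abs_pow, abs_pow,
          abs_of_pos hω0, abs_of_pos hx0, abs_of_pos hωx]
        calc ω ^ (s-1) * (x ^ m * |g x - d₀| / (ω + x) ^ n)
            ≤ ω ^ (s-1) * (x ^ m * (M * x) / (ω + x) ^ n) := by
              gcongr
          _ = M * (ω ^ (s-1) * x ^ (m+1) / (ω + x) ^ n) := by ring
          _ ≤ M * 1 := by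
              gcongr
              rw [div_le_one (by positivity)]
              calc ω ^ (s-1) * x ^ (m+1) ≤ (ω + x) ^ (s-1) * (ω + x) ^ (m+1) := by
                    gcongr <;> linarith
                _ = (ω + x) ^ n := by rw [← pow_add]; congr 1; omega
          _ = M := mul_one M
      · exact integrable_const M
      · -- pointwise limit
        rw [ae_restrict_iff' measurableSet_Ioc]
        refine ae_of_all _ fun x hx => ?_
        have hx0 : (0:ℝ) < x := hx.1
        have hca : ContinuousAt (fun ω : ℝ =>
            ω ^ (s - 1) * (x ^ m * (g x - d₀) / (ω + x) ^ n)) 0 := by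
          apply ContinuousAt.mul (continuousAt_pow _ _)
          apply ContinuousAt.div continuousAt_const (by fun_prop)
          have : (0:ℝ) < 0 + x := by linarith
          positivity
        have hv : (fun ω : ℝ => ω ^ (s - 1) * (x ^ m * (g x - d₀) / (ω + x) ^ n)) 0 = 0 := by
          simp [zero_pow (by omega : s - 1 ≠ 0)]
        rw [← hv]
        exact hca.tendsto.mono_left nhdsWithin_le_nhds
    exact (tendsto_congr' heq).mpr hmain
  have hfin := hEt.add hBt
  rw [add_zero] at hfin
  exact (tendsto_congr' hev).mpr hfin
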